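/- (Envelope Theorem) Let D ⊆ ℝᴷ be open, let f : ℝᴺ × ℝᴷ → ℝ and Cˡ : ℝᴺ × ℝᴷ → ℝ (l = 1,…,L) be continuously differentiable, let z* : D → ℝᴺ be continuously differentiable and Λ : D → ℝᴸ be continuous, and suppose for every a ∈ D: (i) Cˡ(z*(a), a) = 0 for all l, and (ii) the first-order condition ∇_z f(z*(a), a) = Σₗ Λₗ(a)·∇_z Cˡ(z*(a), a) holds. Then the value function V(a) := f(z*(a), a) is continuously differentiable on D, and for every a ∈ D and every k, ∂V/∂aₖ(a) = (∂f/∂aₖ)(z*(a), a) − Σₗ Λₗ(a)·(∂Cˡ/∂aₖ)(z*(a), a). -/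

import Mathlib

/-- Envelope Theorem: if `z*(a)` is a C¹ family of points satisfying the binding
constraints `C l (z*(a), a) = 0` and the Lagrangian stationarity condition in `z` with continuous
multipliers `Λ(a)`, then the value function `V(a) = f(z*(a), a)` is C¹ on `D` and
`∂V/∂aₖ = ∂f/∂aₖ - ∑ l Λ_l(a) ∂Cˡ/∂aₖ`, all partial derivatives in `a` being evaluated at
`(z*(a), a)`. -/
theorem stmt_1 (N K L : ℕ) (D : Set (Fin K → ℝ)) (hD : IsOpen D)
    (f : (Fin N → ℝ) × (Fin K → ℝ) → ℝ) (hf : ContDiff ℝ 1 f)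
    (C : Fin L → (Fin N → ℝ) × (Fin K → ℝ) → ℝ) (hC : ∀ l, ContDiff ℝ 1 (C l))
    (zstar : (Fin K → ℝ) → (Fin N → ℝ)) (hz : ContDiffOn ℝ 1 zstar D)
    (Λ : (Fin K → ℝ) → (Fin L → ℝ)) (hΛ : ContinuousOn Λ D)
    (hbind : ∀ a ∈ D, ∀ l, C l (zstar a, a) = 0)
    (hFOC : ∀ a ∈ D, fderiv ℝ (fun z => f (z, a)) (zstar a)
       = ∑ l, Λ a l • fderiv ℝ (fun z => C l (z, a)) (zstar a)) :
    ContDiffOn ℝ 1 (fun a => f (zstar a, a)) D ∧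
    ∀ a ∈ D, ∀ k : Fin K,
      fderiv ℝ (fun a' => f (zstar a', a')) a (Pi.single k 1)
        = fderiv ℝ (fun b => f (zstar a, b)) a (Pi.single k 1)
          - ∑ l, Λ a l * fderiv ℝ (fun b => C l (zstar a, b)) a (Pi.single k 1) := by
  have hV : ContDiffOn ℝ 1 (fun a => f (zstar a, a)) D :=
    hf.comp_contDiffOn (hz.prodMk contDiffOn_id)
  refine ⟨hV, ?_⟩
  intro a ha k
  have hza : DifferentiableAt ℝ zstar a :=
    (hz.contDiffAt (hD.mem_nhds ha)).differentiableAt one_ne_zero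
  set p : (Fin N → ℝ) × (Fin K → ℝ) := (zstar a, a) with hp
  have hfd : DifferentiableAt ℝ f p := (hf.differentiable one_ne_zero).differentiableAt
  set Z := fderiv ℝ zstar a with hZ
  have hpair : HasFDerivAt (fun a' => (zstar a', a'))
      (Z.prod (ContinuousLinearMap.id ℝ _)) a :=
    HasFDerivAt.prodMk hza.hasFDerivAt (hasFDerivAt_id a)
  have hVd : fderiv ℝ (fun a' => f (zstar a', a')) a
      = (fderiv ℝ f p).comp (Z.prod (ContinuousLinearMap.id ℝ _)) := by
    have h : HasFDerivAt (fun a' => f (zstar a', a'))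
        ((fderiv ℝ f p).comp (Z.prod (ContinuousLinearMap.id ℝ _))) a :=
      HasFDerivAt.comp (g := f) a hfd.hasFDerivAt hpair
    exact h.fderiv
  have hinl : ∀ (g : (Fin N → ℝ) × (Fin K → ℝ) → ℝ), DifferentiableAt ℝ g p →
      fderiv ℝ (fun z => g (z, a)) (zstar a)
        = (fderiv ℝ g p).comp (ContinuousLinearMap.inl ℝ _ _) := by
    intro g hg
    have h1 : HasFDerivAt (fun z : Fin N → ℝ => (z, a))
        (ContinuousLinearMap.inl ℝ (Fin N → ℝ) (Fin K → ℝ)) (zstar a) :=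
      HasFDerivAt.prodMk (hasFDerivAt_id _) (hasFDerivAt_const a _)
    have h : HasFDerivAt (fun z => g (z, a))
        ((fderiv ℝ g p).comp (ContinuousLinearMap.inl ℝ _ _)) (zstar a) :=
      HasFDerivAt.comp (g := g) _ hg.hasFDerivAt h1
    exact h.fderiv
  have hinr : ∀ (g : (Fin N → ℝ) × (Fin K → ℝ) → ℝ), DifferentiableAt ℝ g p →
      fderiv ℝ (fun b => g (zstar a, b)) a
        = (fderiv ℝ g p).comp (ContinuousLinearMap.inr ℝ _ _) := by
    intro g hg
    have h1 : HasFDerivAt (fun b : Fin K → ℝ => (zstar a, b))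
        (ContinuousLinearMap.inr ℝ (Fin N → ℝ) (Fin K → ℝ)) a :=
      HasFDerivAt.prodMk (hasFDerivAt_const _ _) (hasFDerivAt_id _)
    have h : HasFDerivAt (fun b => g (zstar a, b))
        ((fderiv ℝ g p).comp (ContinuousLinearMap.inr ℝ _ _)) a :=
      HasFDerivAt.comp (g := g) _ hg.hasFDerivAt h1
    exact h.fderiv
  have hCd : ∀ l, DifferentiableAt ℝ (C l) p :=
    fun l => ((hC l).differentiable one_ne_zero).differentiableAt
  set v : Fin K → ℝ := Pi.single k 1 with hv
  -- constraint identity: for each l, D_z C l (Z v) + D_a C l v = 0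
  have hCzero : ∀ l, fderiv ℝ (C l) p (Z v, (0:Fin K → ℝ))
      + fderiv ℝ (C l) p ((0:Fin N → ℝ), v) = 0 := by
    intro l
    have hcomp : fderiv ℝ (fun a' => C l (zstar a', a')) a
        = (fderiv ℝ (C l) p).comp (Z.prod (ContinuousLinearMap.id ℝ _)) := by
      have h : HasFDerivAt (fun a' => C l (zstar a', a'))
          ((fderiv ℝ (C l) p).comp (Z.prod (ContinuousLinearMap.id ℝ _))) a :=
        HasFDerivAt.comp (g := C l) a (hCd l).hasFDerivAt hpair
      exact h.fderiv
    have hev : (fun a' => C l (zstar a', a')) =ᶠ[nhds a] fun _ => (0:ℝ) :=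
      Filter.eventuallyEq_of_mem (hD.mem_nhds ha) (fun x hx => hbind x hx l)
    have h0 : fderiv ℝ (fun a' => C l (zstar a', a')) a = 0 := by
      rw [hev.fderiv_eq]; exact fderiv_const_apply 0
    have h1 : fderiv ℝ (C l) p (Z v, v) = 0 := by
      have := congrArg (fun (T : (Fin K → ℝ) →L[ℝ] ℝ) => T v) (h0 ▸ hcomp)
      simpa using this.symm
    have hsplit : (Z v, v) = ((Z v, (0:Fin K → ℝ)) + ((0:Fin N → ℝ), v)) := by
      simp [Prod.ext_iff]
    rw [← map_add]
    rw [← hsplit]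
    exact h1
  -- split the total derivative of V
  have hVsplit : fderiv ℝ (fun a' => f (zstar a', a')) a v
      = fderiv ℝ f p (Z v, (0:Fin K → ℝ)) + fderiv ℝ f p ((0:Fin N → ℝ), v) := by
    rw [hVd]
    have hsplit : (Z v, v) = ((Z v, (0:Fin K → ℝ)) + ((0:Fin N → ℝ), v)) := by
      simp [Prod.ext_iff]
    simp only [ContinuousLinearMap.comp_apply, ContinuousLinearMap.prod_apply,
      ContinuousLinearMap.id_apply]
    rw [hsplit, map_add]
  have hfz : fderiv ℝ f p (Z v, (0:Fin K → ℝ))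
      = ∑ l, Λ a l * fderiv ℝ (C l) p (Z v, (0:Fin K → ℝ)) := by
    have := congrArg (fun (T : (Fin N → ℝ) →L[ℝ] ℝ) => T (Z v)) (hFOC a ha)
    simp only [ContinuousLinearMap.sum_apply, ContinuousLinearMap.smul_apply,
      smul_eq_mul] at this
    have hl : ∀ l, fderiv ℝ (fun z => C l (z, a)) (zstar a) (Z v)
        = fderiv ℝ (C l) p (Z v, (0:Fin K → ℝ)) := by
      intro l; rw [hinl (C l) (hCd l)]; rfl
    have hfl : fderiv ℝ (fun z => f (z, a)) (zstar a) (Z v)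
        = fderiv ℝ f p (Z v, (0:Fin K → ℝ)) := by
      rw [hinl f hfd]; rfl
    rw [← hfl, this]
    exact Finset.sum_congr rfl (fun l _ => by rw [hl l])
  have hfa : fderiv ℝ (fun b => f (zstar a, b)) a v = fderiv ℝ f p ((0:Fin N → ℝ), v) := by
    rw [hinr f hfd]; rfl
  have hCa : ∀ l, fderiv ℝ (fun b => C l (zstar a, b)) a v
      = fderiv ℝ (C l) p ((0:Fin N → ℝ), v) := by
    intro l; rw [hinr (C l) (hCd l)]; rfl
  rw [hVsplit, hfz, hfa]
  have : ∀ l, fderiv ℝ (C l) p (Z v, (0:Fin K → ℝ))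
      = - fderiv ℝ (C l) p ((0:Fin N → ℝ), v) := by
    intro l; linarith [hCzero l]
  simp only [this, hCa]
  ring_nf
  rw [Finset.sum_neg_distrib]
  ring
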